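/- Let L be a nondegenerate even integral lattice and r ∈ L primitive. The reflection σ_r belongs to the stable orthogonal group Õ(L) (i.e. σ_r preserves L and acts as the identity on the discriminant group L∨/L) if and only if r² = 2 or r² = -2. -/

import Mathlib

open Matrix

/-- The subgroup of vectors of `ℚ^ι` with integral coordinates (the lattice `L` inside `L ⊗ ℚ`). -/
def intVecs (ι : Type*) [Fintype ι] : AddSubgroup (ι → ℚ) where
  carrier := {x | ∀ i, ∃ z : ℤ, x i = z}
  add_mem' := by
    intro a b ha hb i
    obtain ⟨z, hz⟩ := ha i
    obtain ⟨w, hw⟩ := hb i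
    exact ⟨z + w, by simp [Pi.add_apply, hz, hw]⟩
  zero_mem' := fun i => ⟨0, by simp⟩
  neg_mem' := by
    intro a ha i
    obtain ⟨z, hz⟩ := ha i
    exact ⟨-z, by simp [Pi.neg_apply, hz]⟩

/-- The dual lattice `L∨ ⊆ L ⊗ ℚ` of the lattice with Gram matrix `B`:
vectors pairing integrally with every lattice vector. -/
def dualLat {ι : Type*} [Fintype ι] (B : Matrix ι ι ℤ) : AddSubgroup (ι → ℚ) where
  carrier := {x | ∀ v : ι → ℤ, ∃ z : ℤ,
    x ⬝ᵥ (B.map (Int.cast : ℤ → ℚ)).mulVec (fun i => (v i : ℚ)) = z}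
  add_mem' := by
    intro a b ha hb v
    obtain ⟨z, hz⟩ := ha v
    obtain ⟨w, hw⟩ := hb v
    exact ⟨z + w, by rw [add_dotProduct, hz, hw]; push_cast; ring⟩
  zero_mem' := fun v => ⟨0, by simp⟩
  neg_mem' := by
    intro a ha v
    obtain ⟨z, hz⟩ := ha v
    exact ⟨-z, by rw [neg_dotProduct, hz]; push_cast; ring⟩

/-- The reflection `σ_r` extended ℚ-linearly: `σ_r(x) = x - (2(x,r)/(r,r))·r`. -/
def reflQ {ι : Type*} [Fintype ι] (B : Matrix ι ι ℤ) (r : ι → ℤ) (x : ι → ℚ) : ι → ℚ :=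
  fun i => x i -
    (2 * (x ⬝ᵥ (B.map (Int.cast : ℤ → ℚ)).mulVec (fun j => (r j : ℚ))) /
      ((r ⬝ᵥ B.mulVec r : ℤ) : ℚ)) * (r i : ℚ)

/-- For a primitive vector `r` of a nondegenerate even lattice with `(r,r) ≠ 0`,
the reflection `σ_r` lies in the stable orthogonal group `Õ(L)` (it preserves `L` and acts as
the identity on the discriminant group `L∨/L`) if and only if `r² = 2` or `r² = -2`. -/

lemma castPair {n : ℕ} (B : Matrix (Fin n) (Fin n) ℤ) (l r : Fin n → ℤ) :
    (fun i => (l i : ℚ)) ⬝ᵥ (B.map (Int.cast : ℤ → ℚ)) *ᵥ (fun j => (r j : ℚ))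
      = ((l ⬝ᵥ B *ᵥ r : ℤ) : ℚ) := by
  simp only [dotProduct, Matrix.mulVec, Matrix.map_apply]
  push_cast
  rfl

lemma bezout {n : ℕ} (r : Fin n → ℤ)
    (hprim : ∀ (k : ℤ) (v : Fin n → ℤ), r = k • v → IsUnit k) :
    ∃ y : Fin n → ℤ, ∑ i, y i * r i = 1 := by
  set I : Ideal ℤ := Ideal.span (Set.range r) with hI
  set d : ℤ := Submodule.IsPrincipal.generator I with hdd
  have hspan : Ideal.span {d} = I := Submodule.IsPrincipal.span_singleton_generator I
  have hd : ∀ i, d ∣ r i := fun i =>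
    Ideal.mem_span_singleton.mp (hspan ▸ Ideal.subset_span ⟨i, rfl⟩)
  have hrdv : r = d • (fun i => r i / d) := by
    funext i
    exact (Int.mul_ediv_cancel' (hd i)).symm
  have hu : IsUnit d := hprim d _ hrdv
  have htop : I = ⊤ := by rw [← hspan]; exact Ideal.span_singleton_eq_top.mpr hu
  have h1 : (1 : ℤ) ∈ I := by rw [htop]; trivial
  obtain ⟨c, hc⟩ := (Submodule.mem_span_range_iff_exists_fun ℤ).mp h1
  exact ⟨c, by simpa [smul_eq_mul] using hc⟩

theorem stmt_2 (n : ℕ) (B : Matrix (Fin n) (Fin n) ℤ)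
    (hsymm : B.IsSymm) (hnd : B.det ≠ 0)
    (heven : ∀ v : Fin n → ℤ, Even (v ⬝ᵥ B.mulVec v))
    (r : Fin n → ℤ)
    (hprim : ∀ (k : ℤ) (v : Fin n → ℤ), r = k • v → IsUnit k)
    (hr : r ⬝ᵥ B.mulVec r ≠ 0) :
    ((∀ l : Fin n → ℤ, reflQ B r (fun i => (l i : ℚ)) ∈ intVecs (Fin n)) ∧
      (∀ x ∈ dualLat B, reflQ B r x - x ∈ intVecs (Fin n)))
    ↔ (r ⬝ᵥ B.mulVec r = 2 ∨ r ⬝ᵥ B.mulVec r = -2) := by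
  set N : ℤ := r ⬝ᵥ B.mulVec r with hNdef
  have hNq : ((N : ℚ)) ≠ 0 := Int.cast_ne_zero.mpr hr
  set Bq : Matrix (Fin n) (Fin n) ℚ := B.map (Int.cast : ℤ → ℚ) with hBq
  constructor
  · rintro ⟨-, h2⟩
    obtain ⟨y, hy⟩ := bezout r hprim
    have hBqdet : IsUnit Bq.det := by
      have hdet : Bq.det = (B.det : ℚ) := by
        rw [hBq, show (Int.cast : ℤ → ℚ) = ⇑(Int.castRingHom ℚ) from rfl,
          ← RingHom.mapMatrix_apply, ← RingHom.map_det]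
      rw [hdet]
      exact isUnit_iff_ne_zero.mpr (Int.cast_ne_zero.mpr hnd)
    have hBqsymm : Bqᵀ = Bq := by
      rw [hBq, ← Matrix.transpose_map, hsymm.eq]
    set x : Fin n → ℚ := Bq⁻¹ *ᵥ (fun i => (y i : ℚ)) with hx
    have key : ∀ v : Fin n → ℤ,
        x ⬝ᵥ Bq *ᵥ (fun i => (v i : ℚ)) = ((∑ i, y i * v i : ℤ) : ℚ) := by
      intro v
      rw [Matrix.dotProduct_mulVec]
      have hxB : x ᵥ* Bq = fun i => (y i : ℚ) := by
        have h1 := vecMul_transpose Bq x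
        rw [hBqsymm] at h1
        rw [h1, hx, mulVec_mulVec, Matrix.mul_nonsing_inv _ hBqdet, Matrix.one_mulVec]
      rw [hxB]
      push_cast
      simp [dotProduct]
    have hxdual : x ∈ dualLat B := fun v => ⟨∑ i, y i * v i, key v⟩
    have hx_r : x ⬝ᵥ Bq *ᵥ (fun j => (r j : ℚ)) = 1 := by
      rw [key r, hy]; norm_num
    choose z hz using h2 x hxdual
    have hz' : ∀ i, -((2 : ℚ) / N) * r i = z i := by
      intro i
      have h := hz i
      simp only [Pi.sub_apply, reflQ, ← hBq, hx_r, ← hNdef] at h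
      rw [← h]; ring
    set m : ℤ := ∑ i, y i * z i with hm
    have hmq : (m : ℚ) = -(2 / N) := by
      push_cast [hm]
      calc (∑ i, (y i : ℚ) * (z i : ℚ))
          = ∑ i, (y i : ℚ) * (-((2:ℚ)/N) * r i) := by
            refine Finset.sum_congr rfl fun i _ => ?_
            rw [hz' i]
        _ = -((2:ℚ)/N) * ∑ i, (y i : ℚ) * (r i : ℚ) := by
            rw [Finset.mul_sum]; refine Finset.sum_congr rfl fun i _ => ?_; ring
        _ = -(2/N) := by
            have hcast : (∑ i, (y i : ℚ) * (r i : ℚ)) = ((∑ i, y i * r i : ℤ) : ℚ) := by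
              push_cast; rfl
            rw [hcast, hy]; norm_num
    have h2eq : (2 : ℚ) = (N : ℚ) * ((-m : ℤ) : ℚ) := by
      field_simp at hmq
      push_cast
      linarith
    have hdvd : N ∣ 2 := ⟨-m, by exact_mod_cast h2eq⟩
    have hna : N.natAbs ∣ 2 := by
      have := Int.natAbs_dvd_natAbs.mpr hdvd
      simpa using this
    obtain ⟨c, hc⟩ := heven r
    rcases Nat.Prime.eq_one_or_self_of_dvd Nat.prime_two _ hna with h | h
    · omega
    · rcases Int.natAbs_eq_iff.mp h with h' | h' <;> [left; right] <;> exact_mod_cast h'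
  · intro hN
    constructor
    · intro l i
      rcases hN with h | h
      · refine ⟨l i - (l ⬝ᵥ B *ᵥ r) * r i, ?_⟩
        simp only [reflQ, castPair, ← hNdef, h]
        push_cast
        ring
      · refine ⟨l i + (l ⬝ᵥ B *ᵥ r) * r i, ?_⟩
        simp only [reflQ, castPair, ← hNdef, h]
        push_cast
        ring
    · intro x hx i
      obtain ⟨w, hw⟩ := hx r
      rcases hN with h | h
      · refine ⟨-(w * r i), ?_⟩
        simp only [Pi.sub_apply, reflQ, ← hBq, hw, ← hNdef, h]
        rw [show (x ⬝ᵥ Bq *ᵥ fun j => (r j : ℚ)) = w from hw]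
        push_cast
        ring
      · refine ⟨w * r i, ?_⟩
        simp only [Pi.sub_apply, reflQ, ← hBq, hw, ← hNdef, h]
        rw [show (x ⬝ᵥ Bq *ᵥ fun j => (r j : ℚ)) = w from hw]
        push_cast
        ring
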